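/- For every nonnegative integer j, the number of 3×3 nonnegative integer matrices with all row and column sums equal to j satisfies H_3(j) = C(j+2,4) + C(j+3,4) + C(j+4,4), where C(n,k) denotes the binomial coefficient. -/
import Mathlib

open Finset

private lemma hockey (k n : ℕ) : ∑ i ∈ range n, (i + k).choose k = (n + k).choose (k + 1) := by
  induction n with
  | zero => simp [Nat.choose_eq_zero_of_lt]
  | succ n ih =>
      rw [sum_range_succ, ih]
      have : n + 1 + k = (n + k) + 1 := by ring
      rw [this, Nat.choose_succ_succ' (n + k) k, Nat.add_comm]

private lemma card_prod_filter {α β : Type*} (s : Finset α) (t : Finset β) (Q : α → β → Prop)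
    [DecidablePred fun p : α × β => Q p.1 p.2] [∀ a, DecidablePred (Q a)] :
    ((s ×ˢ t).filter fun p => Q p.1 p.2).card = ∑ a ∈ s, (t.filter (Q a)).card := by
  rw [Finset.card_filter, Finset.sum_product]
  refine Finset.sum_congr rfl fun a _ => ?_
  rw [Finset.card_filter]

private lemma simplex1 (n m : ℕ) (h : m < n) :
    ((range n).filter fun b => b ≤ m).card = (m + 1).choose 1 := by
  have : (range n).filter (fun b => b ≤ m) = range (m + 1) := by
    ext b; simp only [mem_filter, mem_range]; omega
  simp [this]

private lemma simplex2 (n m : ℕ) (h : m < n) :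
    ((range n ×ˢ range n).filter fun p => p.1 + p.2 ≤ m).card = (m + 2).choose 2 := by
  rw [card_prod_filter _ _ (fun a b => a + b ≤ m)]
  rw [← Finset.sum_subset (Finset.range_subset_range.2 (by omega : m + 1 ≤ n))
      (fun a _ ha => by
        rw [Finset.card_eq_zero, Finset.filter_eq_empty_iff]
        intro b _; simp only [mem_range] at ha ⊢; omega)]
  have step : ∀ a ∈ range (m + 1),
      ((range n).filter fun b => a + b ≤ m).card = (m - a + 1).choose 1 := by
    intro a ha
    simp only [mem_range] at ha
    have : ((range n).filter fun b => a + b ≤ m) = (range n).filter fun b => b ≤ m - a := by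
      ext b; simp only [mem_filter, mem_range]; omega
    rw [this, simplex1 n (m - a) (by omega)]
  rw [Finset.sum_congr rfl step]
  have hr := Finset.sum_range_reflect (fun i => (i + 1).choose 1) (m + 1)
  simp only [Nat.add_sub_cancel] at hr
  rw [hr]
  simpa using hockey 1 (m + 1)

private lemma simplex3 (n m : ℕ) (h : m < n) :
    ((range n ×ˢ (range n ×ˢ range n)).filter
      fun p : ℕ × ℕ × ℕ => p.1 + p.2.1 + p.2.2 ≤ m).card = (m + 3).choose 3 := by
  rw [card_prod_filter _ _ (fun a (q : ℕ × ℕ) => a + q.1 + q.2 ≤ m)]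
  rw [← Finset.sum_subset (Finset.range_subset_range.2 (by omega : m + 1 ≤ n))
      (fun a _ ha => by
        rw [Finset.card_eq_zero, Finset.filter_eq_empty_iff]
        intro b hb
        simp only [mem_range] at ha
        omega)]
  have step : ∀ a ∈ range (m + 1),
      (((range n ×ˢ range n)).filter fun q : ℕ × ℕ => a + q.1 + q.2 ≤ m).card
        = (m - a + 2).choose 2 := by
    intro a ha
    simp only [mem_range] at ha
    have : ((range n ×ˢ range n).filter fun q : ℕ × ℕ => a + q.1 + q.2 ≤ m)
        = (range n ×ˢ range n).filter fun q : ℕ × ℕ => q.1 + q.2 ≤ m - a := by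
      ext q; simp only [mem_filter, mem_product, mem_range]; omega
    rw [this, simplex2 n (m - a) (by omega)]
  rw [Finset.sum_congr rfl step]
  have hr := Finset.sum_range_reflect (fun i => (i + 2).choose 2) (m + 1)
  simp only [Nat.add_sub_cancel] at hr
  rw [hr]
  simpa using hockey 2 (m + 1)

private lemma simplex4 (n m : ℕ) (h : m < n) :
    ((range n ×ˢ (range n ×ˢ (range n ×ˢ range n))).filter
      fun p : ℕ × ℕ × ℕ × ℕ => p.1 + p.2.1 + p.2.2.1 + p.2.2.2 ≤ m).card
        = (m + 4).choose 4 := by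
  rw [card_prod_filter _ _ (fun a (q : ℕ × ℕ × ℕ) => a + q.1 + q.2.1 + q.2.2 ≤ m)]
  rw [← Finset.sum_subset (Finset.range_subset_range.2 (by omega : m + 1 ≤ n))
      (fun a _ ha => by
        rw [Finset.card_eq_zero, Finset.filter_eq_empty_iff]
        intro b hb
        simp only [mem_range] at ha
        omega)]
  have step : ∀ a ∈ range (m + 1),
      ((range n ×ˢ (range n ×ˢ range n)).filter
        fun q : ℕ × ℕ × ℕ => a + q.1 + q.2.1 + q.2.2 ≤ m).card
        = (m - a + 3).choose 3 := by
    intro a ha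
    simp only [mem_range] at ha
    have : ((range n ×ˢ (range n ×ˢ range n)).filter
          fun q : ℕ × ℕ × ℕ => a + q.1 + q.2.1 + q.2.2 ≤ m)
        = (range n ×ˢ (range n ×ˢ range n)).filter
          fun q : ℕ × ℕ × ℕ => q.1 + q.2.1 + q.2.2 ≤ m - a := by
      ext q; simp only [mem_filter, mem_product, mem_range]; omega
    rw [this, simplex3 n (m - a) (by omega)]
  rw [Finset.sum_congr rfl step]
  have hr := Finset.sum_range_reflect (fun i => (i + 3).choose 3) (m + 1)
  simp only [Nat.add_sub_cancel] at hr
  rw [hr]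
  simpa using hockey 3 (m + 1)

/-- The box of quadruples with all entries at most `j`. -/
private def mybox (j : ℕ) : Finset (ℕ × ℕ × ℕ × ℕ) :=
  range (j+1) ×ˢ (range (j+1) ×ˢ (range (j+1) ×ˢ range (j+1)))

private lemma mem_mybox {j : ℕ} {x : ℕ × ℕ × ℕ × ℕ} :
    x ∈ mybox j ↔ x.1 < j + 1 ∧ x.2.1 < j + 1 ∧ x.2.2.1 < j + 1 ∧ x.2.2.2 < j + 1 := by
  simp [mybox, mem_product, mem_range]

/-- strict simplex count -/
private lemma card_strict (j : ℕ) :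
    ((mybox j).filter fun x => x.1 + x.2.1 + x.2.2.1 + x.2.2.2 < j).card
      = (j + 3).choose 4 := by
  rcases j with _ | m
  · have h0 : ((3:ℕ).choose 4) = 0 := by decide
    rw [show ((0:ℕ)+3) = 3 by rfl, h0, Finset.card_eq_zero, Finset.filter_eq_empty_iff]
    intro x _; omega
  · have : ((mybox (m+1)).filter fun x => x.1 + x.2.1 + x.2.2.1 + x.2.2.2 < m + 1)
        = (mybox (m+1)).filter fun x => x.1 + x.2.1 + x.2.2.1 + x.2.2.2 ≤ m := by
      apply Finset.filter_congr; intro x _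
      constructor <;> (intro h; omega)
    rw [this]
    exact simplex4 (m + 2) m (by omega)

private lemma cardU (j : ℕ) :
    ((mybox j).filter fun x => x.1 + x.2.1 ≤ j ∧ x.2.2.1 + x.2.2.2 ≤ j).card
      = (j+2).choose 2 * (j+2).choose 2 := by
  have h2 : ((range (j+1) ×ˢ range (j+1)).filter fun p : ℕ × ℕ => p.1 + p.2 ≤ j).card
      = (j+2).choose 2 := simplex2 (j+1) j (by omega)
  rw [← h2]
  rw [Finset.card_filter, Finset.card_filter, mybox, Finset.sum_mul_sum]
  simp only [Finset.sum_product]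
  refine Finset.sum_congr rfl fun a _ => ?_
  refine Finset.sum_congr rfl fun b _ => ?_
  refine Finset.sum_congr rfl fun c _ => ?_
  refine Finset.sum_congr rfl fun d _ => ?_
  by_cases h1 : a + b ≤ j <;> by_cases hh : c + d ≤ j <;> simp [h1, hh]

/-- count of the first violation set -/
private lemma cardA (j : ℕ) :
    ((mybox j).filter fun x =>
        (x.1 + x.2.1 ≤ j ∧ x.2.2.1 + x.2.2.2 ≤ j) ∧ j < x.1 + x.2.2.1).card
      = (j + 3).choose 4 := by
  rw [← card_strict j]
  apply Finset.card_nbij'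
    (i := fun x => (x.2.1, j - x.1 - x.2.1, x.2.2.2, j - x.2.2.1 - x.2.2.2))
    (j := fun y => (j - y.1 - y.2.1, y.1, j - y.2.2.1 - y.2.2.2, y.2.2.1))
  · rintro ⟨a, b, c, d⟩ hx
    simp [mem_mybox] at hx ⊢
    omega
  · rintro ⟨p, q, r, s⟩ hy
    simp [mem_mybox] at hy ⊢
    omega
  · rintro ⟨a, b, c, d⟩ hx
    simp [mem_mybox] at hx
    dsimp only
    simp only [Prod.mk.injEq, and_true, true_and, eq_self_iff_true]
    omega
  · rintro ⟨p, q, r, s⟩ hy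
    simp [mem_mybox] at hy
    dsimp only
    simp only [Prod.mk.injEq, and_true, true_and, eq_self_iff_true]
    omega

/-- count of the second violation set -/
private lemma cardB (j : ℕ) :
    ((mybox j).filter fun x =>
        ((x.1 + x.2.1 ≤ j ∧ x.2.2.1 + x.2.2.2 ≤ j) ∧ ¬ j < x.1 + x.2.2.1)
          ∧ j < x.2.1 + x.2.2.2).card
      = (j + 3).choose 4 := by
  rw [← card_strict j]
  apply Finset.card_nbij'
    (i := fun x => (x.1, j - x.1 - x.2.1, x.2.2.1, j - x.2.2.1 - x.2.2.2))
    (j := fun y => (y.1, j - y.1 - y.2.1, y.2.2.1, j - y.2.2.1 - y.2.2.2))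
  · rintro ⟨a, b, c, d⟩ hx
    simp [mem_mybox] at hx ⊢
    omega
  · rintro ⟨p, q, r, s⟩ hy
    simp [mem_mybox] at hy ⊢
    omega
  · rintro ⟨a, b, c, d⟩ hx
    simp [mem_mybox] at hx
    dsimp only
    simp only [Prod.mk.injEq, and_true, true_and, eq_self_iff_true]
    omega
  · rintro ⟨p, q, r, s⟩ hy
    simp [mem_mybox] at hy
    dsimp only
    simp only [Prod.mk.injEq, and_true, true_and, eq_self_iff_true]
    omega

private lemma choose2_mul (n : ℕ) : 2 * (n+2).choose 2 = (n+2) * (n+1) := by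
  have h := Nat.descFactorial_eq_factorial_mul_choose (n+2) 2
  simp [Nat.descFactorial_succ, Nat.factorial] at h
  rw [← h]; ring

private lemma choose4_mul (n : ℕ) : 24 * (n+3).choose 4 = (n+3)*(n+2)*(n+1)*n := by
  have h := Nat.descFactorial_eq_factorial_mul_choose (n+3) 4
  simp [Nat.descFactorial_succ, Nat.factorial] at h
  rw [← h]; ring

private lemma choose_identity (j : ℕ) :
    (j+2).choose 2 * (j+2).choose 2
      = (j+2).choose 4 + 4 * (j+3).choose 4 + (j+4).choose 4 := by
  rcases j with _ | n
  · decide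
  · apply Nat.eq_of_mul_eq_mul_left (show 0 < 24 by norm_num)
    have h2 := choose2_mul (n + 1)
    have ha := choose4_mul n
    have hb := choose4_mul (n + 1)
    have hc := choose4_mul (n + 2)
    calc 24 * ((n+1+2).choose 2 * (n+1+2).choose 2)
        = 6 * ((2 * (n+3).choose 2) * (2 * (n+3).choose 2)) := by ring_nf
      _ = 6 * (((n+3)*(n+2)) * ((n+3)*(n+2))) := by rw [h2]
      _ = (n+3)*(n+2)*(n+1)*n + 4*((n+4)*(n+3)*(n+2)*(n+1)) + ((n+5)*(n+4)*(n+3)*(n+2)) := by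
          ring
      _ = 24 * (n+3).choose 4 + 4 * (24 * (n+4).choose 4) + 24 * (n+5).choose 4 := by
          rw [ha]
          rw [show (n+4)*(n+3)*(n+2)*(n+1) = (n+1+3)*(n+1+2)*(n+1+1)*(n+1) by ring, hb]
          rw [show (n+5)*(n+4)*(n+3)*(n+2) = (n+2+3)*(n+2+2)*(n+2+1)*(n+2) by ring, hc]
      _ = 24 * ((n+1+2).choose 4 + 4 * (n+1+3).choose 4 + (n+1+4).choose 4) := by ring_nf

/-- The main count. -/
private lemma cardF (j : ℕ) :
    ((mybox j).filter fun x =>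
        x.1 + x.2.1 ≤ j ∧ x.2.2.1 + x.2.2.2 ≤ j ∧ x.1 + x.2.2.1 ≤ j ∧
          x.2.1 + x.2.2.2 ≤ j ∧ j ≤ x.1 + x.2.1 + x.2.2.1 + x.2.2.2).card
      = (j+2).choose 4 + (j+3).choose 4 + (j+4).choose 4 := by
  classical
  set U := (mybox j).filter fun x : ℕ×ℕ×ℕ×ℕ => x.1 + x.2.1 ≤ j ∧ x.2.2.1 + x.2.2.2 ≤ j with hUdef
  have h1 := Finset.card_filter_add_card_filter_not
    (s := U) (p := fun x : ℕ×ℕ×ℕ×ℕ => j < x.1 + x.2.2.1)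
  set U2 := U.filter fun x : ℕ×ℕ×ℕ×ℕ => ¬ j < x.1 + x.2.2.1 with hU2def
  have h2 := Finset.card_filter_add_card_filter_not
    (s := U2) (p := fun x : ℕ×ℕ×ℕ×ℕ => j < x.2.1 + x.2.2.2)
  set U3 := U2.filter fun x : ℕ×ℕ×ℕ×ℕ => ¬ j < x.2.1 + x.2.2.2 with hU3def
  have h3 := Finset.card_filter_add_card_filter_not
    (s := U3) (p := fun x : ℕ×ℕ×ℕ×ℕ => x.1 + x.2.1 + x.2.2.1 + x.2.2.2 < j)
  -- identify the pieces
  have eA : U.filter (fun x : ℕ×ℕ×ℕ×ℕ => j < x.1 + x.2.2.1)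
      = (mybox j).filter fun x =>
        (x.1 + x.2.1 ≤ j ∧ x.2.2.1 + x.2.2.2 ≤ j) ∧ j < x.1 + x.2.2.1 := by
    ext x
    simp only [hUdef, mem_filter, mem_mybox]
    omega
  have eB : U2.filter (fun x : ℕ×ℕ×ℕ×ℕ => j < x.2.1 + x.2.2.2)
      = (mybox j).filter fun x =>
        ((x.1 + x.2.1 ≤ j ∧ x.2.2.1 + x.2.2.2 ≤ j) ∧ ¬ j < x.1 + x.2.2.1)
          ∧ j < x.2.1 + x.2.2.2 := by
    ext x
    simp only [hU2def, hUdef, mem_filter, mem_mybox]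
    omega
  have eC : U3.filter (fun x : ℕ×ℕ×ℕ×ℕ => x.1 + x.2.1 + x.2.2.1 + x.2.2.2 < j)
      = (mybox j).filter fun x => x.1 + x.2.1 + x.2.2.1 + x.2.2.2 < j := by
    ext x
    simp only [hU3def, hU2def, hUdef, mem_filter, mem_mybox]
    omega
  have eF : U3.filter (fun x : ℕ×ℕ×ℕ×ℕ => ¬ x.1 + x.2.1 + x.2.2.1 + x.2.2.2 < j)
      = (mybox j).filter fun x =>
        x.1 + x.2.1 ≤ j ∧ x.2.2.1 + x.2.2.2 ≤ j ∧ x.1 + x.2.2.1 ≤ j ∧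
          x.2.1 + x.2.2.2 ≤ j ∧ j ≤ x.1 + x.2.1 + x.2.2.1 + x.2.2.2 := by
    ext x
    simp only [hU3def, hU2def, hUdef, mem_filter, mem_mybox]
    omega
  rw [eA, cardA j] at h1
  rw [eB, cardB j] at h2
  rw [eC, card_strict j, eF] at h3
  have hu := cardU j
  rw [← hUdef] at hu
  have hid := choose_identity j
  omega


/-- `H k j`: the number of `k × k` matrices with nonnegative integer entries
such that every row sum and every column sum equals `j`. -/
noncomputable def H (k j : ℕ) : ℕ :=
  Nat.card {A : Matrix (Fin k) (Fin k) ℕ //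
    (∀ i, ∑ j', A i j' = j) ∧ (∀ j', ∑ i, A i j' = j)}

theorem H_three (j : ℕ) :
    H 3 j = Nat.choose (j + 2) 4 + Nat.choose (j + 3) 4 + Nat.choose (j + 4) 4 := by
  have key : H 3 j = ((mybox j).filter
      fun x : ℕ×ℕ×ℕ×ℕ =>
        x.1 + x.2.1 ≤ j ∧ x.2.2.1 + x.2.2.2 ≤ j ∧ x.1 + x.2.2.1 ≤ j ∧
          x.2.1 + x.2.2.2 ≤ j ∧ j ≤ x.1 + x.2.1 + x.2.2.1 + x.2.2.2).card := by
    rw [H, ← Nat.card_eq_finsetCard]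
    apply Nat.card_congr
    refine
      { toFun := fun p => ⟨(p.1 0 0, p.1 0 1, p.1 1 0, p.1 1 1), ?_⟩
        invFun := fun q => ⟨Matrix.of
            ![![q.1.1, q.1.2.1, j - q.1.1 - q.1.2.1],
              ![q.1.2.2.1, q.1.2.2.2, j - q.1.2.2.1 - q.1.2.2.2],
              ![j - q.1.1 - q.1.2.2.1, j - q.1.2.1 - q.1.2.2.2,
                q.1.1 + q.1.2.1 + q.1.2.2.1 + q.1.2.2.2 - j]], ?_⟩
        left_inv := ?_
        right_inv := ?_ }
    · obtain ⟨A, hr, hc⟩ := p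
      have h0 := hr 0; have h1 := hr 1; have h2 := hr 2
      have g0 := hc 0; have g1 := hc 1; have g2 := hc 2
      simp only [Fin.sum_univ_three] at h0 h1 h2 g0 g1 g2
      simp only [Finset.mem_filter, mem_mybox]
      omega
    · obtain ⟨⟨a, b, c, d⟩, hx⟩ := q
      simp only [Finset.mem_filter, mem_mybox] at hx
      constructor
      · intro i
        fin_cases i <;> simp [Fin.sum_univ_three] <;> omega
      · intro i
        fin_cases i <;> simp [Fin.sum_univ_three] <;> omega
    · rintro ⟨A, hr, hc⟩
      have h0 := hr 0; have h1 := hr 1; have h2 := hr 2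
      have g0 := hc 0; have g1 := hc 1; have g2 := hc 2
      simp only [Fin.sum_univ_three] at h0 h1 h2 g0 g1 g2
      apply Subtype.ext
      dsimp only
      ext i k
      fin_cases i <;> fin_cases k <;> simp <;> omega
    · rintro ⟨⟨a, b, c, d⟩, hx⟩
      simp only [Finset.mem_filter, mem_mybox] at hx
      apply Subtype.ext
      dsimp only
      simp
  rw [key, cardF]
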